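/- Let H be an abelian Krull-Schmidt category, S : H → G an additive functor with right adjoint T such that T∘S ≅ ⊕_{i∈I} E_i for self-equivalences E_i of H with E_{i₀} = id. If M is a simple object of H such that E_i M ≇ M for all i ≠ i₀, then End_G(S M) is isomorphic as a ring to End_H(M); in particular End_G(S M) is a division ring and S M is indecomposable. -/

import Mathlib

open CategoryTheory CategoryTheory.Limits

universe v u v' u'

/-- A (pre)additive category with finite biproducts is Krull-Schmidt if every object is a
finite biproduct of objects with local endomorphism rings. -/
def IsKrullSchmidt (C : Type u) [Category.{v} C] [Preadditive C] [HasFiniteBiproducts C] :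
    Prop :=
  ∀ X : C, ∃ (n : ℕ) (f : Fin n → C),
    (∀ i, IsLocalRing (End (f i))) ∧ Nonempty (X ≅ ⨁ f)

variable {H : Type u} {G : Type u'} [Category.{v} H] [Category.{v'} G]

section
variable [Abelian H] [HasFiniteBiproducts H] [Preadditive G] [HasFiniteBiproducts G]

instance : HasFiniteProducts (H ⥤ H) := ⟨fun _ => inferInstance⟩

attribute [local instance] HasFiniteBiproducts.of_hasFiniteProducts
attribute [local instance] hasBinaryBiproducts_of_finite_biproducts

/-- A self-equivalence of an abelian category preserves simplicity. -/
lemma simple_map_of_isEquivalence (F : H ⥤ H) [F.IsEquivalence] (M : H) [Simple M] :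
    Simple (F.obj M) := by
  letI e := F.asEquivalence
  haveI hid : Simple ((𝟭 H).obj M) := ‹Simple M›
  haveI : Simple (e.inverse.obj (F.obj M)) := Simple.of_iso (e.unitIso.app M).symm
  constructor
  intro Y f hmono
  haveI : Mono (e.inverse.map f) := inferInstance
  have h1 : IsIso f ↔ IsIso (e.inverse.map f) :=
    ⟨fun _ => inferInstance, fun h => isIso_of_reflects_iso f e.inverse⟩
  rw [h1, Simple.mono_isIso_iff_nonzero (e.inverse.map f), Ne, Ne,
    Functor.map_eq_zero_iff]

/-- Let `H` be an abelian Krull-Schmidt category, `S : H → G` an additive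
functor with right adjoint `T` such that `T∘S ≅ ⊕_{i∈I} E_i` for self-equivalences `E_i`
of `H` with `E_{i₀} = id`.  If `M` is a simple object of `H` such that `E_i M ≇ M` for all
`i ≠ i₀`, then `End_G(S M)` is isomorphic as a ring to `End_H(M)`; in particular
`End_G(S M)` is a division ring and `S M` is indecomposable. -/
theorem clifford_trivial_inertia_simple
    (hH : IsKrullSchmidt H)
    (S : H ⥤ G) (T : G ⥤ H) [S.Additive] [T.Additive] (adj : S ⊣ T)
    {I : Type} [Fintype I] (E : I → H ⥤ H) (i₀ : I)
    (hE0 : E i₀ = 𝟭 H) (hEq : ∀ i, (E i).IsEquivalence)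
    (iso : S ⋙ T ≅ ⨁ E)
    (M : H) (hM : Simple M)
    (hfix : ∀ i, i ≠ i₀ → IsEmpty ((E i).obj M ≅ M)) :
    Nonempty (End (S.obj M) ≃+* End M) ∧
      (Nontrivial (End (S.obj M)) ∧ ∀ f : End (S.obj M), f ≠ 0 → IsUnit f) ∧
      Indecomposable (S.obj M) := by
  have eM : (E i₀).obj M = M := by rw [hE0]; rfl
  -- Hom(M, E_i M) = 0 for i ≠ i₀
  have hzero : ∀ i, i ≠ i₀ → ∀ h : M ⟶ (E i).obj M, h = 0 := by
    intro i hi h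
    by_contra hne
    haveI := hEq i
    haveI : Simple ((E i).obj M) := simple_map_of_isEquivalence (E i) M
    haveI := isIso_of_hom_simple hne
    exact (hfix i hi).false (asIso h).symm
  -- evaluation of the biproduct total identity
  have happ_total :
      ∑ i : I, (biproduct.π E i).app M ≫ (biproduct.ι E i).app M = 𝟙 ((⨁ E).obj M) := by
    have ht := congrArg (fun (α : ⨁ E ⟶ ⨁ E) => α.app M) (biproduct.total (f := E))
    simp only [NatTrans.app_sum, NatTrans.comp_app, NatTrans.id_app] at ht
    exact ht
  -- decomposition of morphisms M ⟶ TSM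
  have hdec : ∀ h : M ⟶ (S ⋙ T).obj M,
      h = (h ≫ iso.hom.app M ≫ (biproduct.π E i₀).app M) ≫
        (biproduct.ι E i₀).app M ≫ iso.inv.app M := by
    intro h
    have key : h ≫ iso.hom.app M =
        ((h ≫ iso.hom.app M) ≫ (biproduct.π E i₀).app M) ≫ (biproduct.ι E i₀).app M := by
      conv_lhs => rw [← Category.comp_id (h ≫ iso.hom.app M), ← happ_total]
      rw [Preadditive.comp_sum, Finset.sum_eq_single i₀]
      · rw [← Category.assoc]
      · intro i _ hi
        rw [← Category.assoc, hzero i hi ((h ≫ iso.hom.app M) ≫ (biproduct.π E i).app M),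
          zero_comp]
      · intro h'; exact absurd (Finset.mem_univ i₀) h'
    calc h = (h ≫ iso.hom.app M) ≫ iso.inv.app M := by simp
      _ = (((h ≫ iso.hom.app M) ≫ (biproduct.π E i₀).app M) ≫ (biproduct.ι E i₀).app M) ≫
            iso.inv.app M := by rw [← key]
      _ = (h ≫ iso.hom.app M ≫ (biproduct.π E i₀).app M) ≫
            (biproduct.ι E i₀).app M ≫ iso.inv.app M := by simp only [Category.assoc]
  have hinj2 : ∀ h : M ⟶ (S ⋙ T).obj M,
      h ≫ iso.hom.app M ≫ (biproduct.π E i₀).app M = 0 → h = 0 := by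
    intro h hh
    rw [hdec h, hh]
    simp
  -- the adjunction hom equivalence
  set Ψ := adj.homEquiv M (S.obj M) with hΨdef
  have hΨ : ∀ f : S.obj M ⟶ S.obj M, Ψ f = adj.unit.app M ≫ T.map f := by
    intro f; rw [hΨdef, Adjunction.homEquiv_unit]
  have hΨ0 : Ψ 0 = 0 := by rw [hΨ]; simp
  -- the comparison map L
  set w : (S ⋙ T).obj M ⟶ M :=
    iso.hom.app M ≫ (biproduct.π E i₀).app M ≫ eqToHom eM with hwdef
  set L : (S.obj M ⟶ S.obj M) → (M ⟶ M) := fun f => Ψ f ≫ w with hLdef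
  have hL0 : L 0 = 0 := by rw [hLdef]; simp only [hΨ0, zero_comp]
  have hLsub : ∀ f g, L (f - g) = L f - L g := by
    intro f g
    simp only [hLdef, hΨ, Functor.map_sub, Preadditive.comp_sub, Preadditive.sub_comp]
  have hLinj : ∀ f, L f = 0 → f = 0 := by
    intro f hf
    have h2 : (Ψ f ≫ iso.hom.app M ≫ (biproduct.π E i₀).app M) ≫ eqToHom eM = 0 := by
      simpa [hLdef, hwdef] using hf
    have h3 : Ψ f ≫ iso.hom.app M ≫ (biproduct.π E i₀).app M = 0 := by
      have := congrArg (fun t => t ≫ eqToHom eM.symm) h2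
      simpa [eqToHom_trans] using this
    have h4 : Ψ f = 0 := hinj2 _ h3
    have := Ψ.injective (h4.trans hΨ0.symm)
    exact this
  have hLinj' : ∀ f g, L f = L g → f = g := by
    intro f g hfg
    have : f - g = 0 := hLinj _ (by rw [hLsub, hfg, sub_self])
    exact sub_eq_zero.mp this
  -- key: L (S.map g) = g ≫ u
  have hu : ∀ g : M ⟶ M, L (S.map g) = g ≫ L (𝟙 (S.obj M)) := by
    intro g
    have hnat : adj.unit.app M ≫ T.map (S.map g) = g ≫ adj.unit.app M := by
      have := adj.unit.naturality g
      simpa using this.symm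
    simp only [hLdef, hΨ]
    rw [hnat]
    simp
  -- the special element hitting 𝟙 M
  set h₀ : M ⟶ (S ⋙ T).obj M :=
    eqToHom eM.symm ≫ (biproduct.ι E i₀).app M ≫ iso.inv.app M with hh₀def
  have hιπ : (biproduct.ι E i₀).app M ≫ (biproduct.π E i₀).app M = 𝟙 ((E i₀).obj M) := by
    have := congrArg (fun (α : E i₀ ⟶ E i₀) => α.app M) (biproduct.ι_π_self E i₀)
    simp only [NatTrans.comp_app, NatTrans.id_app] at this
    exact this
  have hL₀ : L (Ψ.symm h₀) = 𝟙 M := by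
    have : Ψ (Ψ.symm h₀) = h₀ := Ψ.apply_symm_apply h₀
    rw [hLdef]
    simp only [this, Equiv.apply_symm_apply, hh₀def, hwdef, Category.assoc, Iso.inv_hom_id_app_assoc]
    rw [reassoc_of% hιπ, eqToHom_trans, eqToHom_refl]
  -- 𝟙 (S M) ≠ 0
  have h1ne : 𝟙 (S.obj M) ≠ 0 := by
    intro h
    have : Ψ.symm h₀ = 0 := by
      calc Ψ.symm h₀ = Ψ.symm h₀ ≫ 𝟙 (S.obj M) := by simp
        _ = 0 := by rw [h, Limits.comp_zero]
    have h0 : (0 : M ⟶ M) = 𝟙 M := by rw [← hL0, ← hL₀, this]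
    exact id_nonzero M h0.symm
  -- u ≠ 0 and invertible
  have hunz : L (𝟙 (S.obj M)) ≠ 0 := fun h => h1ne (hLinj _ h)
  haveI hUiso : IsIso (L (𝟙 (S.obj M))) := isIso_of_hom_simple hunz
  -- bijectivity of S.map on endomorphisms
  have hSinj : ∀ g : M ⟶ M, S.map g = 0 → g = 0 := by
    intro g hg
    have : g ≫ L (𝟙 (S.obj M)) = 0 := by rw [← hu, hg, hL0]
    calc g = (g ≫ L (𝟙 (S.obj M))) ≫ inv (L (𝟙 (S.obj M))) := by simp
      _ = 0 := by rw [this, zero_comp]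
  have hSsurj : ∀ f : S.obj M ⟶ S.obj M, ∃ g : M ⟶ M, S.map g = f := by
    intro f
    refine ⟨L f ≫ inv (L (𝟙 (S.obj M))), hLinj' _ _ ?_⟩
    rw [hu, Category.assoc, IsIso.inv_hom_id, Category.comp_id]
  -- the ring homomorphism
  let Φ : End M →+* End (S.obj M) :=
    { toFun := fun g => S.map g
      map_one' := by simp [End.one_def]
      map_mul' := fun g h => by simp [End.mul_def]
      map_zero' := S.map_zero _ _
      map_add' := fun g h => S.map_add }
  have hΦbij : Function.Bijective Φ := by
    constructor
    · intro g g' hgg'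
      have : S.map (g - g') = 0 := by
        rw [S.map_sub]; change Φ g - Φ g' = 0; rw [hgg', sub_self]
      have := hSinj _ this
      exact sub_eq_zero.mp this
    · intro f
      obtain ⟨g, hg⟩ := hSsurj f
      exact ⟨g, hg⟩
  let eR : End M ≃+* End (S.obj M) := RingEquiv.ofBijective Φ hΦbij
  have hUnit : ∀ f : End (S.obj M), f ≠ 0 → IsUnit f := by
    intro f hf
    obtain ⟨g, hg⟩ := hSsurj f
    have hgnz : g ≠ 0 := by
      intro h; apply hf; rw [← hg, h]; exact S.map_zero _ _
    haveI := isIso_of_hom_simple hgnz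
    haveI : IsIso f := by rw [← hg]; infer_instance
    exact (isUnit_iff_isIso f).mpr ‹IsIso f›
  refine ⟨⟨eR.symm⟩, ⟨?_, hUnit⟩, ?_, ?_⟩
  · exact nontrivial_of_ne (𝟙 (S.obj M) : End (S.obj M)) 0 h1ne
  · -- ¬ IsZero (S.obj M)
    intro hz
    exact h1ne (hz.eq_of_src _ _)
  · -- biproduct decompositions are trivial
    intro Y Z φ
    set e1 : End (S.obj M) := φ.hom ≫ biprod.fst ≫ biprod.inl ≫ φ.inv with he1def
    have hidem : (e1 : S.obj M ⟶ S.obj M) ≫ e1 = e1 := by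
      simp [he1def]
    by_cases h0 : e1 = 0
    · left
      rw [IsZero.iff_id_eq_zero]
      have hfi : (biprod.fst : Y ⊞ Z ⟶ Y) ≫ (biprod.inl : Y ⟶ Y ⊞ Z) = 0 := by
        have : φ.inv ≫ e1 ≫ φ.hom = biprod.fst ≫ biprod.inl := by
          simp [he1def]
        rw [← this, h0]; simp
      calc 𝟙 Y = biprod.inl ≫ (biprod.fst ≫ biprod.inl) ≫ biprod.fst := by simp
        _ = 0 := by rw [hfi]; simp
    · right
      rw [IsZero.iff_id_eq_zero]
      have := hUnit e1 h0
      haveI hiso : IsIso (e1 : S.obj M ⟶ S.obj M) := (isUnit_iff_isIso e1).mp this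
      have he1 : (e1 : S.obj M ⟶ S.obj M) = 𝟙 (S.obj M) := by
        have : (e1 : S.obj M ⟶ S.obj M) ≫ e1 = e1 ≫ 𝟙 (S.obj M) := by
          rw [hidem, Category.comp_id]
        exact (cancel_epi (e1 : S.obj M ⟶ S.obj M)).mp this
      have hfi : (biprod.fst : Y ⊞ Z ⟶ Y) ≫ (biprod.inl : Y ⟶ Y ⊞ Z) = 𝟙 (Y ⊞ Z) := by
        have h2 : φ.inv ≫ (e1 : S.obj M ⟶ S.obj M) ≫ φ.hom = biprod.fst ≫ biprod.inl := by
          simp [he1def]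
        rw [← h2, he1]; simp
      calc 𝟙 Z = biprod.inr ≫ 𝟙 (Y ⊞ Z) ≫ biprod.snd := by simp
        _ = biprod.inr ≫ (biprod.fst ≫ biprod.inl) ≫ biprod.snd := by rw [hfi]
        _ = 0 := by simp

end
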